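/- There exist constants c > 0, ε₀ ∈ (0,1) and n₀ such that for every n = 2^k ≥ n₀ and every ε ∈ (0, ε₀), the quasi-entropy of the Fourier ε-perturbation satisfies Φ(Id + εF) ≤ −c ε² n log₂ n, where F is the n×n Walsh–Hadamard matrix. -/

import Mathlib

open Matrix Finset

noncomputable section

/-- Walsh–Hadamard matrix of size `2^k`. -/
def WH (k : ℕ) : Matrix (Fin (2^k)) (Fin (2^k)) ℝ := fun i j =>
  ((-1 : ℝ) ^ (∑ b ∈ Finset.range k, ((i.val >>> b) % 2) * ((j.val >>> b) % 2))) /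
    Real.sqrt (2^k)

/-- Quasi-entropy `Φ(M)` (base-2 logs, `0·log 0 = 0`). -/
def qent {n : ℕ} (M : Matrix (Fin n) (Fin n) ℝ) : ℝ :=
  -∑ i, ∑ j, (M i j * M⁻¹ᵀ i j) * Real.logb 2 |M i j * M⁻¹ᵀ i j|

/-- Preconditioned quasi-entropy `Φ_{A,B}(M)`. -/
def qentP {n : ℕ} (A B M : Matrix (Fin n) (Fin n) ℝ) : ℝ :=
  -∑ i, ∑ j, ((M * A) i j * (M⁻¹ᵀ * B) i j) * Real.logb 2 |(M * A) i j * (M⁻¹ᵀ * B) i j|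

/-- Summand of the paired potential. -/
def pairS {n : ℕ} (P Q : Matrix (Fin n) (Fin n ⊕ Fin n) ℝ)
    (M : Matrix (Fin n) (Fin n) ℝ) (i j : Fin n) : ℝ :=
  (M * P) i (Sum.inl j) * (M⁻¹ᵀ * Q) i (Sum.inl j) +
    (M * P) i (Sum.inr j) * (M⁻¹ᵀ * Q) i (Sum.inr j)

/-- Paired potential `Φ̂_{P,Q}(M)` for preconditioners `P Q : n × 2n`. -/
def pairedPot {n : ℕ} (P Q : Matrix (Fin n) (Fin n ⊕ Fin n) ℝ)
    (M : Matrix (Fin n) (Fin n) ℝ) : ℝ :=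
  -∑ i, ∑ j, pairS P Q M i j * Real.logb 2 |pairS P Q M i j|

/-- Planar rotation matrix `R_{i,i',θ}`. -/
def rotMat {n : ℕ} (i i' : Fin n) (θ : ℝ) : Matrix (Fin n) (Fin n) ℝ :=
  Matrix.of fun a b =>
    if a = i ∧ b = i then Real.cos θ
    else if a = i ∧ b = i' then Real.sin θ
    else if a = i' ∧ b = i then -Real.sin θ
    else if a = i' ∧ b = i' then Real.cos θ
    else if a = b then 1 else 0

/-- Spectral norm (ℓ₂ operator norm) of a square real matrix. -/
def specNorm {n : ℕ} (M : Matrix (Fin n) (Fin n) ℝ) : ℝ :=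
  ‖LinearMap.toContinuousLinearMap (Matrix.toEuclideanLin M)‖

/-- Condition number `κ(M) = ‖M‖₂ ‖M⁻¹‖₂`. -/
def condNum {n : ℕ} (M : Matrix (Fin n) (Fin n) ℝ) : ℝ :=
  specNorm M * specNorm M⁻¹

/-- Singular values: square roots of eigenvalues of `Mᴴ M` (= `Mᵀ M` over ℝ). -/
def singVals {n : ℕ} (M : Matrix (Fin n) (Fin n) ℝ) (i : Fin n) : ℝ :=
  Real.sqrt ((Matrix.isHermitian_conjTranspose_mul_self M).eigenvalues i)

/-- Rotation step of the linear algebraic model. -/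
def IsRotStep {n : ℕ} (M M' : Matrix (Fin n) (Fin n) ℝ) : Prop :=
  ∃ (i i' : Fin n) (θ : ℝ), i < i' ∧ M' = rotMat i i' θ * M

/-- Constant gate: one row is multiplied by a nonzero constant. -/
def IsConstGate {n : ℕ} (M M' : Matrix (Fin n) (Fin n) ℝ) : Prop :=
  ∃ (r : Fin n) (c : ℝ), c ≠ 0 ∧ M' = Matrix.updateRow M r (c • M r)

/-- A single step of a linear algebraic algorithm. -/
def IsStep {n : ℕ} (M M' : Matrix (Fin n) (Fin n) ℝ) : Prop :=
  IsRotStep M M' ∨ IsConstGate M M'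

/-- `A` is an `m`-step linear algebraic algorithm. -/
def IsAlgorithm {n : ℕ} (m : ℕ) (A : ℕ → Matrix (Fin n) (Fin n) ℝ) : Prop :=
  A 0 = 1 ∧ ∀ t < m, IsStep (A t) (A (t+1))

/-- The algorithm is uniformly `κ`-well conditioned. -/
def WellConditioned {n : ℕ} (m : ℕ) (A : ℕ → Matrix (Fin n) (Fin n) ℝ) (κ : ℝ) : Prop :=
  ∀ t ≤ m, IsUnit (A t).det ∧ condNum (A t) ≤ κ

end

private lemma key_sum (k : ℕ) (c : ℕ → ℕ) :
    ∑ j ∈ Finset.range (2^k), (-1:ℝ)^(∑ b ∈ Finset.range k, (j / 2^b % 2) * c b)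
      = if ∀ b < k, c b % 2 = 0 then ((2:ℝ)^k) else 0 := by
  induction k with
  | zero => simp
  | succ k ih =>
    have h2 : (2:ℕ)^(k+1) = 2^k + 2^k := by ring
    rw [h2, Finset.sum_range_add]
    have hA : ∑ j ∈ Finset.range (2^k),
        (-1:ℝ)^(∑ b ∈ Finset.range (k+1), (j / 2^b % 2) * c b)
          = ∑ j ∈ Finset.range (2^k), (-1:ℝ)^(∑ b ∈ Finset.range k, (j / 2^b % 2) * c b) := by
      refine Finset.sum_congr rfl fun j hj => ?_
      rw [Finset.sum_range_succ, Nat.div_eq_of_lt (Finset.mem_range.mp hj)]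
      simp
    have hB : ∑ j ∈ Finset.range (2^k),
        (-1:ℝ)^(∑ b ∈ Finset.range (k+1), ((2^k + j) / 2^b % 2) * c b)
          = (-1:ℝ)^(c k) * ∑ j ∈ Finset.range (2^k), (-1:ℝ)^(∑ b ∈ Finset.range k, (j / 2^b % 2) * c b) := by
      rw [Finset.mul_sum]
      refine Finset.sum_congr rfl fun j hj => ?_
      have hj' := Finset.mem_range.mp hj
      have htop : (2^k + j) / 2^k % 2 = 1 := by
        rw [add_comm, Nat.add_div_right _ (pow_pos (by norm_num : (0:ℕ) < 2) k),
          Nat.div_eq_of_lt hj']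
      have hmain : ∀ b < k, (2^k + j) / 2^b % 2 = j / 2^b % 2 := by
        intro b hb
        have e1 : (2:ℕ)^k = 2^(k-b-1) * 2 * 2^b := by
          rw [mul_assoc, ← pow_succ', ← pow_add]
          congr 1
          omega
        rw [add_comm, e1, Nat.add_mul_div_right _ _ (pow_pos (by norm_num : (0:ℕ) < 2) b)]
        omega
      have hsum : ∑ b ∈ Finset.range k, ((2^k + j) / 2^b % 2) * c b
          = ∑ b ∈ Finset.range k, (j / 2^b % 2) * c b :=
        Finset.sum_congr rfl fun b hb => by rw [hmain b (Finset.mem_range.mp hb)]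
      rw [Finset.sum_range_succ, hsum, htop, one_mul, pow_add, mul_comm]
    rw [hA, hB, ih]
    rcases Nat.even_or_odd (c k) with he | ho
    · have hck : c k % 2 = 0 := Nat.even_iff.mp he
      have hiff : (∀ b < k+1, c b % 2 = 0) ↔ (∀ b < k, c b % 2 = 0) := by
        constructor
        · intro h b hb; exact h b (hb.trans (Nat.lt_succ_self k))
        · intro h b hb
          rcases Nat.lt_succ_iff_lt_or_eq.mp hb with h' | rfl
          exacts [h b h', hck]
      rw [he.neg_one_pow]
      by_cases hP : ∀ b < k, c b % 2 = 0
      · rw [if_pos hP, if_pos (hiff.mpr hP)]; ring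
      · rw [if_neg hP, if_neg (fun h => hP (hiff.mp h))]; ring
    · have hck : c k % 2 = 1 := Nat.odd_iff.mp ho
      have hnot : ¬ (∀ b < k+1, c b % 2 = 0) := fun h => by
        have := h k (Nat.lt_succ_self k); omega
      rw [ho.neg_one_pow, if_neg hnot]
      split <;> ring

private lemma WH_transpose (k : ℕ) : (WH k)ᵀ = WH k := by
  ext i j
  simp only [Matrix.transpose_apply, WH]
  congr 1
  exact congrArg _ (Finset.sum_congr rfl fun b _ => Nat.mul_comm _ _)

private lemma WH_mul_WH (k : ℕ) : WH k * WH k = 1 := by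
  ext i l
  rw [Matrix.mul_apply, Matrix.one_apply]
  have hN : (0:ℝ) < 2^k := by positivity
  have hsqrt : Real.sqrt (2^k) * Real.sqrt (2^k) = 2^k := Real.mul_self_sqrt (le_of_lt hN)
  have h1 : ∀ j : Fin (2^k), WH k i j * WH k j l
      = (-1:ℝ)^(∑ b ∈ Finset.range k, (j.val / 2^b % 2) * ((i.val / 2^b % 2) + (l.val / 2^b % 2))) / 2^k := by
    intro j
    simp only [WH, Nat.shiftRight_eq_div_pow]
    rw [div_mul_div_comm, hsqrt, ← pow_add]
    congr 2
    rw [← Finset.sum_add_distrib]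
    exact Finset.sum_congr rfl fun b _ => by ring
  rw [Finset.sum_congr rfl fun j _ => h1 j, ← Finset.sum_div,
    Fin.sum_univ_eq_sum_range (fun j => (-1:ℝ)^(∑ b ∈ Finset.range k, (j / 2^b % 2) * ((i.val / 2^b % 2) + (l.val / 2^b % 2)))) (2^k),
    key_sum]
  have hcond : (∀ b < k, ((i.val / 2^b % 2) + (l.val / 2^b % 2)) % 2 = 0) ↔ i = l := by
    constructor
    · intro h
      refine Fin.ext (Nat.eq_of_testBit_eq fun b => ?_)
      rw [Nat.testBit_eq_decide_div_mod_eq, Nat.testBit_eq_decide_div_mod_eq]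
      by_cases hb : b < k
      · have := h b hb
        have heq : i.val / 2^b % 2 = l.val / 2^b % 2 := by omega
        rw [heq]
      · have hle : (2:ℕ)^k ≤ 2^b := Nat.pow_le_pow_right (by norm_num) (le_of_not_gt hb)
        rw [Nat.div_eq_of_lt (lt_of_lt_of_le i.isLt hle),
          Nat.div_eq_of_lt (lt_of_lt_of_le l.isLt hle)]
    · rintro rfl b _
      omega
  by_cases h : i = l
  · rw [if_pos (hcond.mpr h), if_pos h, div_self (ne_of_gt hN)]
  · rw [if_neg (fun hc => h (hcond.mp hc)), if_neg h, zero_div]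

private lemma WH_sq_entry (k : ℕ) (i j : Fin (2^k)) : WH k i j * WH k i j = 1/(2^k : ℝ) := by
  have hN : (0:ℝ) < 2^k := by positivity
  simp only [WH]
  rw [div_mul_div_comm, Real.mul_self_sqrt (le_of_lt hN), ← pow_add]
  rw [Even.neg_one_pow ⟨_, rfl⟩]

private lemma sum_ite_const {n : ℕ} (i : Fin n) (A B : ℝ) :
    ∑ j : Fin n, (if i = j then A else B) = A + ((n:ℝ) - 1) * B := by
  have h : ∀ j : Fin n, (if i = j then A else B) = B + (if i = j then A - B else 0) := by
    intro j; split <;> ring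
  simp only [h, Finset.sum_add_distrib, Finset.sum_const, Finset.sum_ite_eq,
    Finset.mem_univ, if_true, Finset.card_univ, Fintype.card_fin, nsmul_eq_mul]
  ring

set_option maxHeartbeats 2000000 in
/-- `Φ(Id + εF) ≤ -c ε² n log₂ n` for suitable constants. -/
theorem qent_perturbation_upper :
    ∃ c > (0:ℝ), ∃ ε₀ ∈ Set.Ioo (0:ℝ) 1, ∃ n₀ : ℕ,
      ∀ k : ℕ, n₀ ≤ 2^k → ∀ ε : ℝ, 0 < ε → ε < ε₀ →
        qent (1 + ε • WH k) ≤ -(c * ε^2 * 2^k * Real.logb 2 (2^k)) := by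
  refine ⟨1/2, by norm_num, 1/2, ⟨by norm_num, by norm_num⟩, 2, ?_⟩
  intro k hk ε hε hε2
  set N : ℝ := (2:ℝ)^k with hNdef
  have hNc : ((2^k : ℕ) : ℝ) = N := by push_cast; rfl
  have hN2 : (2:ℝ) ≤ N := by
    rw [← hNc]; exact_mod_cast hk
  clear_value N
  have hN0 : (0:ℝ) < N := by linarith
  have hεsq : ε^2 < 1/4 := by nlinarith
  have h1ε : (3:ℝ)/4 < 1 - ε^2 := by nlinarith
  have h1ε0 : (0:ℝ) < 1 - ε^2 := by nlinarith
  set cc : ℝ := (1 - ε^2)⁻¹ with hccdef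
  have hcc0 : 0 < cc := by positivity
  have hcc1 : 1 ≤ cc := by
    rw [hccdef, le_inv_comm₀] <;> nlinarith
  have hcc43 : cc ≤ 4/3 := by
    rw [hccdef, inv_le_comm₀] <;> nlinarith
  clear_value cc
  set M : Matrix (Fin (2^k)) (Fin (2^k)) ℝ := 1 + ε • WH k with hMdef
  clear_value M
  -- inverse
  have hMinv : M⁻¹ = cc • (1 - ε • WH k) := by
    apply Matrix.inv_eq_right_inv
    have hexp : M * (1 - ε • WH k) = (1 - ε^2) • (1 : Matrix (Fin (2^k)) (Fin (2^k)) ℝ) := by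
      have key : (ε • WH k) * (ε • WH k) = (ε^2) • (1 : Matrix (Fin (2^k)) (Fin (2^k)) ℝ) := by
        rw [Matrix.smul_mul, Matrix.mul_smul, WH_mul_WH, smul_smul]
        ring_nf
      have expand : M * (1 - ε • WH k) = 1 - (ε • WH k) * (ε • WH k) := by
        rw [hMdef, Matrix.add_mul, Matrix.one_mul, Matrix.mul_sub, Matrix.mul_one]
        abel
      rw [expand, key, sub_smul, one_smul]
    rw [Matrix.mul_smul, hexp, smul_smul, hccdef, inv_mul_cancel₀ (ne_of_gt h1ε0), one_smul]
  have hMT : M⁻¹ᵀ = cc • (1 - ε • WH k) := by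
    rw [hMinv, Matrix.transpose_smul, Matrix.transpose_sub, Matrix.transpose_one,
      Matrix.transpose_smul, WH_transpose]
  -- entries
  set d : ℝ := cc * (1 - ε^2 / N) with hddef
  set r : ℝ := cc * (ε^2 / N) with hrdef
  clear_value d r
  have hp : ∀ i j, M i j * M⁻¹ᵀ i j = if i = j then d else -r := by
    intro i j
    rw [hMT]
    have hM : M i j = (if i = j then (1:ℝ) else 0) + ε * WH k i j := by
      rw [hMdef]; simp [Matrix.add_apply, Matrix.one_apply, Matrix.smul_apply]
    have hT : (cc • (1 - ε • WH k)) i j = cc * ((if i = j then (1:ℝ) else 0) - ε * WH k i j) := by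
      simp [Matrix.smul_apply, Matrix.sub_apply, Matrix.one_apply]
    rw [hM, hT]
    have hff : WH k i j * WH k i j = N⁻¹ := by rw [WH_sq_entry k i j, hNdef, one_div]
    by_cases h : i = j
    · rw [if_pos h, if_pos h]
      have : (1 + ε * WH k i j) * (cc * (1 - ε * WH k i j))
          = cc * (1 - ε^2 * (WH k i j * WH k i j)) := by ring
      rw [this, hff, hddef]
      ring
    · rw [if_neg h, if_neg h]
      have : (0 + ε * WH k i j) * (cc * (0 - ε * WH k i j))
          = -(cc * (ε^2 * (WH k i j * WH k i j))) := by ring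
      rw [this, hff, hrdef]
      ring
  -- bounds on d and r
  have hd1 : 1 ≤ d := by
    rw [hddef]
    have h1 : 1 - ε^2 ≤ 1 - ε^2 / N := by
      have : ε^2 / N ≤ ε^2 := by
        rw [div_le_iff₀ hN0]; nlinarith
      linarith
    calc (1:ℝ) = cc * (1 - ε^2) := by rw [hccdef]; field_simp
    _ ≤ cc * (1 - ε^2 / N) := by nlinarith
  have hr0 : 0 < r := by rw [hrdef]; positivity
  have hrlow : ε^2 / N ≤ r := by
    rw [hrdef]; nlinarith [div_pos (by positivity : (0:ℝ) < ε^2) hN0]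
  have hrup : r ≤ N⁻¹ := by
    have hcce : cc * ε^2 ≤ 1 := by nlinarith
    have h : r = (cc * ε^2) / N := by rw [hrdef]; ring
    rw [h, inv_eq_one_div, div_le_div_iff₀ hN0 hN0]
    nlinarith
  -- logs
  have hL1 : 1 ≤ Real.logb 2 N := by
    have h2 : Real.logb 2 2 ≤ Real.logb 2 N :=
      Real.logb_le_logb_of_le (by norm_num) (by norm_num) hN2
    rwa [Real.logb_self_eq_one (by norm_num : (1:ℝ) < 2)] at h2
  have hlogr : Real.logb 2 r ≤ -Real.logb 2 N := by
    have : Real.logb 2 r ≤ Real.logb 2 N⁻¹ :=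
      Real.logb_le_logb_of_le (by norm_num) hr0 hrup
    rwa [Real.logb_inv] at this
  -- assemble qent
  have hqent : qent M = -(N * ((d * Real.logb 2 d) + (N - 1) * ((-r) * Real.logb 2 r))) := by
    unfold qent
    have hterm : ∀ i j : Fin (2^k), (M i j * M⁻¹ᵀ i j) * Real.logb 2 |M i j * M⁻¹ᵀ i j|
        = if i = j then d * Real.logb 2 d else (-r) * Real.logb 2 r := by
      intro i j
      rw [hp i j]
      by_cases h : i = j
      · rw [if_pos h, if_pos h, abs_of_pos (by linarith)]
      · rw [if_neg h, if_neg h, abs_neg, abs_of_pos hr0]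
    rw [show ∑ i, ∑ j, (M i j * M⁻¹ᵀ i j) * Real.logb 2 |M i j * M⁻¹ᵀ i j|
        = ∑ i : Fin (2^k), ∑ j : Fin (2^k), (if i = j then d * Real.logb 2 d else (-r) * Real.logb 2 r)
      from Finset.sum_congr rfl fun i _ => Finset.sum_congr rfl fun j _ => hterm i j]
    rw [Finset.sum_congr rfl fun i (_ : i ∈ Finset.univ) => sum_ite_const i _ _]
    rw [Finset.sum_const, Finset.card_univ, Fintype.card_fin, nsmul_eq_mul, hNc]
  rw [hqent]
  -- final inequality
  have hA : 0 ≤ d * Real.logb 2 d :=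
    mul_nonneg (by linarith) (Real.logb_nonneg (by norm_num) hd1)
  have hB : (ε^2 / N) * Real.logb 2 N ≤ (-r) * Real.logb 2 r := by
    have h1 : r * Real.logb 2 N ≤ r * (-Real.logb 2 r) := by
      apply mul_le_mul_of_nonneg_left _ (le_of_lt hr0)
      · linarith
    have h2 : (ε^2/N) * Real.logb 2 N ≤ r * Real.logb 2 N := by
      apply mul_le_mul_of_nonneg_right hrlow
      · linarith
    nlinarith
  have hBpos : 0 ≤ (-r) * Real.logb 2 r := by
    have : 0 ≤ (ε^2/N) * Real.logb 2 N := by positivity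
    linarith
  have hεN : 0 < ε^2 / N := by positivity
  have hkey : 1/2 * ε^2 * Real.logb 2 N ≤ (N - 1) * ((-r) * Real.logb 2 r) := by
    have h3 : (N - 1) * ((ε^2/N) * Real.logb 2 N) ≤ (N - 1) * ((-r) * Real.logb 2 r) := by
      apply mul_le_mul_of_nonneg_left hB (by linarith)
    have h4 : 1/2 * ε^2 * Real.logb 2 N ≤ (N - 1) * ((ε^2/N) * Real.logb 2 N) := by
      rw [show (N-1) * ((ε^2/N) * Real.logb 2 N) = ((N-1)/N) * (ε^2 * Real.logb 2 N) by ring]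
      have h5 : (1:ℝ)/2 ≤ (N-1)/N := by
        rw [le_div_iff₀ hN0]; linarith
      have h6 : 0 ≤ ε^2 * Real.logb 2 N := by positivity
      nlinarith
    linarith
  have hgoal : 1/2 * ε^2 * N * Real.logb 2 N ≤ N * ((d * Real.logb 2 d) + (N - 1) * ((-r) * Real.logb 2 r)) := by
    have := hkey
    nlinarith [mul_le_mul_of_nonneg_left hkey (le_of_lt hN0)]
  rw [hNdef] at hgoal ⊢
  linarith
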